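/- Let ν be a norm on ℝⁿ that is (Fréchet) differentiable at every x ≠ 0. Then the function ν² : ℝⁿ → ℝ, x ↦ ν(x)², is continuously differentiable on all of ℝⁿ; its gradient at 0 is 0, and its gradient at x ≠ 0 equals 2ν(x)∇ν(x), where ∇ν(x) denotes the gradient of ν at x. -/

import Mathlib

open InnerProductSpace Topology Filter

variable {n : ℕ}

private abbrev Eu (n : ℕ) := EuclideanSpace ℝ (Fin n)

section aux
variable {ν : Eu n → ℝ}

private lemma nu_zero (hν_eq : ∀ x : Eu n, ν x = 0 ↔ x = 0) : ν 0 = 0 := (hν_eq 0).mpr rfl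

private lemma nu_neg (hν_smul : ∀ (c : ℝ) (x : Eu n), ν (c • x) = |c| * ν x) (x : Eu n) :
    ν (-x) = ν x := by
  simpa using hν_smul (-1) x

private lemma nu_nonneg (hν_eq : ∀ x : Eu n, ν x = 0 ↔ x = 0)
    (hν_smul : ∀ (c : ℝ) (x : Eu n), ν (c • x) = |c| * ν x)
    (hν_add : ∀ x y : Eu n, ν (x + y) ≤ ν x + ν y) (x : Eu n) : 0 ≤ ν x := by
  have h := hν_add x (-x)
  rw [add_neg_cancel, nu_zero hν_eq, nu_neg hν_smul] at h
  linarith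

private lemma nu_sum_le (hν_eq : ∀ x : Eu n, ν x = 0 ↔ x = 0)
    (hν_add : ∀ x y : Eu n, ν (x + y) ≤ ν x + ν y)
    (s : Finset (Fin n)) (f : Fin n → Eu n) :
    ν (∑ i ∈ s, f i) ≤ ∑ i ∈ s, ν (f i) := by
  classical
  induction s using Finset.induction with
  | empty => simp [nu_zero hν_eq]
  | insert a s hns ih =>
    rw [Finset.sum_insert hns, Finset.sum_insert hns]
    exact (hν_add _ _).trans (by linarith)

private lemma nu_bound (hν_eq : ∀ x : Eu n, ν x = 0 ↔ x = 0)
    (hν_smul : ∀ (c : ℝ) (x : Eu n), ν (c • x) = |c| * ν x)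
    (hν_add : ∀ x y : Eu n, ν (x + y) ≤ ν x + ν y) :
    ∃ M : ℝ, 0 < M ∧ ∀ x : Eu n, ν x ≤ M * ‖x‖ := by
  classical
  refine ⟨(∑ i, ν (EuclideanSpace.single i (1:ℝ))) + 1, ?_, ?_⟩
  · have : 0 ≤ ∑ i, ν (EuclideanSpace.single i (1:ℝ)) :=
      Finset.sum_nonneg fun i _ => nu_nonneg hν_eq hν_smul hν_add _
    linarith
  · intro x
    have hx : x = ∑ i, x i • EuclideanSpace.single i (1:ℝ) := by
      simpa [EuclideanSpace.basisFun_apply] using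
        ((EuclideanSpace.basisFun (Fin n) ℝ).sum_repr x).symm
    have hcoord : ∀ i, |x i| ≤ ‖x‖ := by
      intro i
      have h1 : (inner ℝ (EuclideanSpace.single i (1:ℝ)) x : ℝ) = x i := by
        simp [EuclideanSpace.inner_single_left]
      have h2 := abs_real_inner_le_norm (EuclideanSpace.single i (1:ℝ)) x
      rw [h1, EuclideanSpace.norm_single] at h2
      simpa using h2
    calc ν x = ν (∑ i, x i • EuclideanSpace.single i (1:ℝ)) := by rw [← hx]
      _ ≤ ∑ i, ν (x i • EuclideanSpace.single i (1:ℝ)) := nu_sum_le hν_eq hν_add _ _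
      _ = ∑ i, |x i| * ν (EuclideanSpace.single i (1:ℝ)) := by simp [hν_smul]
      _ ≤ ∑ i, ‖x‖ * ν (EuclideanSpace.single i (1:ℝ)) := by
          refine Finset.sum_le_sum fun i _ => ?_
          exact mul_le_mul_of_nonneg_right (hcoord i) (nu_nonneg hν_eq hν_smul hν_add _)
      _ = (∑ i, ν (EuclideanSpace.single i (1:ℝ))) * ‖x‖ := by
          rw [← Finset.mul_sum, mul_comm]
      _ ≤ ((∑ i, ν (EuclideanSpace.single i (1:ℝ))) + 1) * ‖x‖ := by
          have : (0:ℝ) ≤ ‖x‖ := norm_nonneg x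
          nlinarith

end aux
section aux2
variable {ν : Eu n → ℝ}

private lemma nu_continuous (hν_eq : ∀ x : Eu n, ν x = 0 ↔ x = 0)
    (hν_smul : ∀ (c : ℝ) (x : Eu n), ν (c • x) = |c| * ν x)
    (hν_add : ∀ x y : Eu n, ν (x + y) ≤ ν x + ν y)
    (hν_diff : ∀ x : Eu n, x ≠ 0 → DifferentiableAt ℝ ν x) :
    Continuous ν := by
  obtain ⟨M, hM0, hM⟩ := nu_bound hν_eq hν_smul hν_add
  rw [continuous_iff_continuousAt]
  intro x
  rcases eq_or_ne x 0 with rfl | hx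
  · have h1 : Tendsto ν (𝓝 (0 : Eu n)) (𝓝 0) := by
      refine squeeze_zero_norm (fun x => ?_) (by simpa using (tendsto_norm_zero (E := Eu n)).const_mul M)
      rw [Real.norm_eq_abs, abs_of_nonneg (nu_nonneg hν_eq hν_smul hν_add x)]
      exact hM x
    simpa [ContinuousAt, nu_zero hν_eq] using h1
  · exact (hν_diff x hx).continuousAt

/-- derivative along a line -/
private lemma nu_line_deriv {x y : Eu n} (hx : DifferentiableAt ℝ ν x) :
    HasDerivAt (fun t : ℝ => ν (x + t • y)) (fderiv ℝ ν x y) 0 := by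
  have hline : HasDerivAt (fun t : ℝ => x + t • y) y 0 := by
    simpa using ((hasDerivAt_id (0:ℝ)).smul_const y).const_add x
  have hx' : HasFDerivAt ν (fderiv ℝ ν x) ((fun t : ℝ => x + t • y) 0) := by
    simpa using hx.hasFDerivAt
  exact hx'.comp_hasDerivAt 0 hline

/-- subgradient bound -/
private lemma nu_fderiv_le (hν_smul : ∀ (c : ℝ) (x : Eu n), ν (c • x) = |c| * ν x)
    (hν_add : ∀ x y : Eu n, ν (x + y) ≤ ν x + ν y)
    {x : Eu n} (hx : DifferentiableAt ℝ ν x) (y : Eu n) :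
    fderiv ℝ ν x y ≤ ν y := by
  have hg := nu_line_deriv (y := y) hx
  have hs := hasDerivAt_iff_tendsto_slope.1 hg
  have hmono : Tendsto (slope (fun t : ℝ => ν (x + t • y)) 0) (𝓝[>] (0:ℝ))
      (𝓝 (fderiv ℝ ν x y)) :=
    hs.mono_left (nhdsWithin_mono _ fun t ht => ne_of_gt ht)
  refine le_of_tendsto hmono ?_
  filter_upwards [self_mem_nhdsWithin] with t (ht : 0 < t)
  have h1 : ν (x + t • y) ≤ ν x + t * ν y := by
    have := hν_add x (t • y)
    rw [hν_smul t y, abs_of_pos ht] at this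
    exact this
  rw [slope_def_field]
  rw [sub_zero, div_le_iff₀ ht]
  simp only [zero_smul, add_zero]
  nlinarith

/-- Euler identity -/
private lemma nu_fderiv_self (hν_smul : ∀ (c : ℝ) (x : Eu n), ν (c • x) = |c| * ν x)
    {x : Eu n} (hx : DifferentiableAt ℝ ν x) :
    fderiv ℝ ν x x = ν x := by
  have hg := nu_line_deriv (y := x) hx
  have hh : HasDerivAt (fun t : ℝ => ν x + t * ν x) (ν x) 0 := by
    simpa using ((hasDerivAt_id (0:ℝ)).mul_const (ν x)).const_add (ν x)
  have heq : (fun t : ℝ => ν x + t * ν x) =ᶠ[𝓝 (0:ℝ)] fun t => ν (x + t • x) := by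
    filter_upwards [eventually_gt_nhds (show (-1:ℝ) < 0 by norm_num)] with t ht
    have h1 : x + t • x = (1 + t) • x := by
      rw [add_smul, one_smul]
    rw [h1, hν_smul, abs_of_pos (by linarith)]
    ring
  have hh' : HasDerivAt (fun t : ℝ => ν (x + t • x)) (ν x) 0 := hh.congr_of_eventuallyEq heq.symm
  exact hg.unique hh'

private lemma nu_subgrad (hν_smul : ∀ (c : ℝ) (x : Eu n), ν (c • x) = |c| * ν x)
    (hν_add : ∀ x y : Eu n, ν (x + y) ≤ ν x + ν y)
    {x : Eu n} (hx : DifferentiableAt ℝ ν x) (y : Eu n) (t : ℝ) :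
    ν x + t * fderiv ℝ ν x y ≤ ν (x + t • y) := by
  have h1 := nu_fderiv_le hν_smul hν_add hx (x + t • y)
  rw [map_add, (fderiv ℝ ν x).map_smul] at h1
  rw [nu_fderiv_self hν_smul hx] at h1
  simpa [smul_eq_mul] using h1

end aux2
section aux3
variable {ν : Eu n → ℝ}

private lemma nu_dir_cont (hν_eq : ∀ x : Eu n, ν x = 0 ↔ x = 0)
    (hν_smul : ∀ (c : ℝ) (x : Eu n), ν (c • x) = |c| * ν x)
    (hν_add : ∀ x y : Eu n, ν (x + y) ≤ ν x + ν y)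
    (hν_diff : ∀ x : Eu n, x ≠ 0 → DifferentiableAt ℝ ν x)
    {x₀ : Eu n} (hx₀ : x₀ ≠ 0) (y : Eu n) :
    Tendsto (fun x => fderiv ℝ ν x y) (𝓝 x₀) (𝓝 (fderiv ℝ ν x₀ y)) := by
  have hνc := nu_continuous hν_eq hν_smul hν_add hν_diff
  set L := fderiv ℝ ν x₀ y with hL
  rw [Metric.tendsto_nhds]
  intro ε hε
  -- difference quotient tends to L at x₀
  have hg := nu_line_deriv (y := y) (hν_diff x₀ hx₀)
  have hs := hasDerivAt_iff_tendsto_slope.1 hg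
  -- pick t₊ > 0 with slope < L + ε
  have hup : Tendsto (slope (fun t : ℝ => ν (x₀ + t • y)) 0) (𝓝[>] (0:ℝ)) (𝓝 L) :=
    hs.mono_left (nhdsWithin_mono _ fun t ht => ne_of_gt ht)
  have hlo : Tendsto (slope (fun t : ℝ => ν (x₀ + t • y)) 0) (𝓝[<] (0:ℝ)) (𝓝 L) :=
    hs.mono_left (nhdsWithin_mono _ fun t ht => ne_of_lt ht)
  obtain ⟨tp, htp, htppos⟩ :=
    ((hup.eventually_lt_const (show L < L + ε by linarith)).and self_mem_nhdsWithin).exists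
  obtain ⟨tm, htm, htmneg⟩ :=
    ((hlo.eventually_const_lt (show L - ε < L by linarith)).and self_mem_nhdsWithin).exists
  replace htppos : 0 < tp := htppos
  replace htmneg : tm < 0 := htmneg
  rw [slope_def_field, sub_zero] at htp htm
  -- continuity of the two difference quotients in x
  have hcup : ContinuousAt (fun x : Eu n => (ν (x + tp • y) - ν x) / tp) x₀ := by
    exact (((hνc.comp (continuous_id.add continuous_const)).sub hνc).div_const tp).continuousAt
  have hclo : ContinuousAt (fun x : Eu n => (ν (x + tm • y) - ν x) / tm) x₀ := by
    exact (((hνc.comp (continuous_id.add continuous_const)).sub hνc).div_const tm).continuousAt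
  have hevup : ∀ᶠ x in 𝓝 x₀, (ν (x + tp • y) - ν x) / tp < L + ε := by
    simp only [zero_smul, add_zero] at htp
    exact hcup.eventually_lt_const (by simpa using htp)
  have hevlo : ∀ᶠ x in 𝓝 x₀, L - ε < (ν (x + tm • y) - ν x) / tm := by
    simp only [zero_smul, add_zero] at htm
    exact hclo.eventually_const_lt (by simpa using htm)
  filter_upwards [hevup, hevlo, eventually_ne_nhds hx₀] with x h1 h2 hxne
  have hdx := hν_diff x hxne
  -- sandwich
  have hub : fderiv ℝ ν x y ≤ (ν (x + tp • y) - ν x) / tp := by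
    have := nu_subgrad hν_smul hν_add hdx y tp
    rw [le_div_iff₀ htppos]
    linarith
  have hlb : (ν (x + tm • y) - ν x) / tm ≤ fderiv ℝ ν x y := by
    have := nu_subgrad hν_smul hν_add hdx y tm
    rw [div_le_iff_of_neg htmneg]
    nlinarith
  rw [Real.dist_eq, abs_sub_lt_iff]
  constructor <;> linarith

private lemma clm_rep (L : Eu n →L[ℝ] ℝ) :
    L = ∑ i, L (EuclideanSpace.single i (1:ℝ)) • EuclideanSpace.proj i := by
  ext z
  rw [ContinuousLinearMap.sum_apply]
  have hz : z = ∑ i, z i • EuclideanSpace.single i (1:ℝ) := by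
    simpa [EuclideanSpace.basisFun_apply] using
      ((EuclideanSpace.basisFun (Fin n) ℝ).sum_repr z).symm
  conv_lhs => rw [hz]
  rw [map_sum]
  refine Finset.sum_congr rfl fun i _ => ?_
  simp [mul_comm]

private lemma nu_fderiv_cont (hν_eq : ∀ x : Eu n, ν x = 0 ↔ x = 0)
    (hν_smul : ∀ (c : ℝ) (x : Eu n), ν (c • x) = |c| * ν x)
    (hν_add : ∀ x y : Eu n, ν (x + y) ≤ ν x + ν y)
    (hν_diff : ∀ x : Eu n, x ≠ 0 → DifferentiableAt ℝ ν x)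
    {x₀ : Eu n} (hx₀ : x₀ ≠ 0) :
    ContinuousAt (fun x => fderiv ℝ ν x) x₀ := by
  have h : Tendsto (fun x => ∑ i, fderiv ℝ ν x (EuclideanSpace.single i (1:ℝ)) •
      (EuclideanSpace.proj i : Eu n →L[ℝ] ℝ)) (𝓝 x₀)
      (𝓝 (∑ i, fderiv ℝ ν x₀ (EuclideanSpace.single i (1:ℝ)) •
      (EuclideanSpace.proj i : Eu n →L[ℝ] ℝ))) :=
    tendsto_finset_sum _ fun i _ =>
      (nu_dir_cont hν_eq hν_smul hν_add hν_diff hx₀ _).smul tendsto_const_nhds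
  have heq : (fun x => fderiv ℝ ν x) = fun x => ∑ i,
      fderiv ℝ ν x (EuclideanSpace.single i (1:ℝ)) • (EuclideanSpace.proj i : Eu n →L[ℝ] ℝ) :=
    funext fun x => clm_rep _
  rw [ContinuousAt, heq]
  rw [← clm_rep (fderiv ℝ ν x₀)] at h
  exact h

end aux3
section aux4
variable {ν : Eu n → ℝ}

private lemma nu_sq_hasfderiv (hν_eq : ∀ x : Eu n, ν x = 0 ↔ x = 0)
    (hν_smul : ∀ (c : ℝ) (x : Eu n), ν (c • x) = |c| * ν x)
    (hν_add : ∀ x y : Eu n, ν (x + y) ≤ ν x + ν y)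
    (hν_diff : ∀ x : Eu n, x ≠ 0 → DifferentiableAt ℝ ν x) (x : Eu n) :
    HasFDerivAt (fun y => ν y ^ 2) ((2 * ν x) • fderiv ℝ ν x) x := by
  rcases eq_or_ne x 0 with rfl | hx
  · -- derivative is 0 at 0
    have h0 : (2 * ν (0 : Eu n)) • fderiv ℝ ν 0 = 0 := by
      rw [nu_zero hν_eq]; simp
    rw [h0]
    obtain ⟨M, hM0, hM⟩ := nu_bound hν_eq hν_smul hν_add
    rw [hasFDerivAt_iff_isLittleO_nhds_zero]
    have hsimp : (fun h : Eu n => ν (0 + h) ^ 2 - ν 0 ^ 2 - (0 : Eu n →L[ℝ] ℝ) h) =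
        fun h => ν h ^ 2 := by
      funext h; rw [nu_zero hν_eq]; simp
    rw [hsimp]
    rw [Asymptotics.isLittleO_iff]
    intro c hc
    have hball : ∀ᶠ h : Eu n in 𝓝 0, ‖h‖ < c / M ^ 2 := by
      have : Tendsto (fun h : Eu n => ‖h‖) (𝓝 0) (𝓝 0) := tendsto_norm_zero
      exact this.eventually_lt_const (by positivity)
    filter_upwards [hball] with h hh
    have h1 : ν h ≤ M * ‖h‖ := hM h
    have h2 : 0 ≤ ν h := nu_nonneg hν_eq hν_smul hν_add h
    rw [Real.norm_eq_abs, abs_of_nonneg (by positivity)]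
    have h3 : ν h ^ 2 ≤ M ^ 2 * ‖h‖ ^ 2 := by nlinarith
    have h4 : (0:ℝ) ≤ ‖h‖ := norm_nonneg h
    have h5 : M ^ 2 * ‖h‖ ≤ c := by
      have := (lt_div_iff₀ (show (0:ℝ) < M ^ 2 by positivity)).1 hh
      nlinarith
    nlinarith [sq_nonneg ‖h‖, mul_le_mul_of_nonneg_right h5 h4]
  · have hdx := hν_diff x hx
    have h1 : HasDerivAt (fun t : ℝ => t ^ 2) (2 * ν x) (ν x) := by
      simpa using hasDerivAt_pow 2 (ν x)
    exact h1.comp_hasFDerivAt x hdx.hasFDerivAt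

private lemma nu_fderiv_norm_le (hν_eq : ∀ x : Eu n, ν x = 0 ↔ x = 0)
    (hν_smul : ∀ (c : ℝ) (x : Eu n), ν (c • x) = |c| * ν x)
    (hν_add : ∀ x y : Eu n, ν (x + y) ≤ ν x + ν y)
    {M : ℝ} (hM0 : 0 < M) (hM : ∀ x : Eu n, ν x ≤ M * ‖x‖) (x : Eu n) :
    ‖fderiv ℝ ν x‖ ≤ M := by
  by_cases hdx : DifferentiableAt ℝ ν x
  · refine ContinuousLinearMap.opNorm_le_bound _ hM0.le fun y => ?_
    rw [Real.norm_eq_abs, abs_le]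
    constructor
    · have h1 := nu_fderiv_le hν_smul hν_add hdx (-y)
      rw [map_neg] at h1
      have h2 : ν (-y) ≤ M * ‖y‖ := by
        rw [nu_neg hν_smul]; exact hM y
      linarith [nu_neg hν_smul y, hM y]
    · exact (nu_fderiv_le hν_smul hν_add hdx y).trans (hM y)
  · rw [fderiv_zero_of_not_differentiableAt hdx]
    simpa using hM0.le

end aux4

/-- If `ν` is a norm on `ℝⁿ` differentiable at every `x ≠ 0`, then `x ↦ ν(x)²` is
continuously differentiable on all of `ℝⁿ`, its gradient at `0` is `0`, and its gradient
at `x ≠ 0` equals `2ν(x)∇ν(x)`. -/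
theorem stmt4 {n : ℕ} (ν : EuclideanSpace ℝ (Fin n) → ℝ)
    (hν_eq : ∀ x, ν x = 0 ↔ x = 0)
    (hν_smul : ∀ (c : ℝ) (x), ν (c • x) = |c| * ν x)
    (hν_add : ∀ x y, ν (x + y) ≤ ν x + ν y)
    (hν_diff : ∀ x : EuclideanSpace ℝ (Fin n), x ≠ 0 → DifferentiableAt ℝ ν x) :
    ContDiff ℝ 1 (fun x => ν x ^ 2) ∧
    gradient (fun x => ν x ^ 2) 0 = 0 ∧
    ∀ x : EuclideanSpace ℝ (Fin n), x ≠ 0 →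
      gradient (fun y => ν y ^ 2) x = (2 * ν x) • gradient ν x := by
  have hD := nu_sq_hasfderiv hν_eq hν_smul hν_add hν_diff
  have hfd : (fun x => fderiv ℝ (fun y => ν y ^ 2) x) =
      fun x : Eu n => (2 * ν x) • fderiv ℝ ν x := funext fun x => (hD x).fderiv
  obtain ⟨M, hM0, hM⟩ := nu_bound hν_eq hν_smul hν_add
  have hνc := nu_continuous hν_eq hν_smul hν_add hν_diff
  have hDcont : Continuous fun x : Eu n => (2 * ν x) • fderiv ℝ ν x := by
    rw [continuous_iff_continuousAt]
    intro x₀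
    rcases eq_or_ne x₀ 0 with rfl | hx₀
    · have hzero : (2 * ν (0 : Eu n)) • fderiv ℝ ν 0 = 0 := by
        rw [nu_zero hν_eq]; simp
      rw [ContinuousAt, hzero]
      refine squeeze_zero_norm (fun x => ?_)
        (by simpa using (tendsto_norm_zero (E := Eu n)).const_mul (2 * M * M))
      rw [norm_smul, Real.norm_eq_abs,
        abs_of_nonneg (by nlinarith [nu_nonneg hν_eq hν_smul hν_add x])]
      have hb1 : ν x ≤ M * ‖x‖ := hM x
      have hb2 : ‖fderiv ℝ ν x‖ ≤ M := nu_fderiv_norm_le hν_eq hν_smul hν_add hM0 hM x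
      have hb3 : 0 ≤ ν x := nu_nonneg hν_eq hν_smul hν_add x
      have hb4 : (0:ℝ) ≤ ‖fderiv ℝ ν x‖ := norm_nonneg _
      nlinarith [norm_nonneg x]
    · exact ((continuousAt_const.mul hνc.continuousAt).smul
        (nu_fderiv_cont hν_eq hν_smul hν_add hν_diff hx₀))
  refine ⟨?_, ?_, ?_⟩
  · rw [contDiff_one_iff_fderiv]
    refine ⟨fun x => (hD x).differentiableAt, ?_⟩
    show Continuous fun x => fderiv ℝ (fun y => ν y ^ 2) x
    rw [hfd]
    exact hDcont
  · have h0 : HasFDerivAt (fun y => ν y ^ 2) (0 : Eu n →L[ℝ] ℝ) 0 := by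
      have := hD 0
      rwa [nu_zero hν_eq, mul_zero, zero_smul] at this
    have := h0.hasGradientAt.gradient
    simpa using this
  · intro x hx
    have key : (toDual ℝ (Eu n)) ((2 * ν x) • gradient ν x) = (2 * ν x) • fderiv ℝ ν x := by
      rw [map_smulₛₗ]
      simp [gradient, starRingEnd_apply, LinearIsometryEquiv.apply_symm_apply]
    have hgrad : HasGradientAt (fun y => ν y ^ 2) ((2 * ν x) • gradient ν x) x := by
      rw [hasGradientAt_iff_hasFDerivAt, key]
      exact hD x
    exact hgrad.gradient
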